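/- Failure of Datalog rewritability: there exist a finite set Σ of TGDs, a Boolean CQ Q, and a set V of views with frontier-guarded Datalog definitions such that (Q, V, Σ) has the bounded treewidth view image property, Q is monotonically determined by V with respect to Σ over all instances, and yet there is no Datalog rewriting of Q over V with respect to Σ; indeed there is no rewriting expressible as a (possibly infinite) disjunction of CQs over the view schema. -/

import Mathlib

namespace MonDetPaper

/-- Relation symbols (a schema is a finite set of these). -/
abbrev RelSym : Type := ℕ
/-- First-order variables. -/
abbrev Var : Type := ℕ

/-- An atom (or fact): a relation symbol together with a list of arguments. -/
abbrev Atom (α : Type) : Type := RelSym × List α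

/-- An instance over domain `D`: a (possibly infinite) set of facts. -/
abbrev Inst (D : Type) : Type := Set (Atom D)

/-- Apply a map on domain elements to an atom. -/
def mapAtom {α β : Type} (h : α → β) (a : Atom α) : Atom β := (a.1, a.2.map h)

/-- Image of an instance under a map on domain elements. -/
def mapInst {α β : Type} (h : α → β) (I : Inst α) : Inst β := (mapAtom h) '' I

/-- `h` is a homomorphism from `I` to `J`. -/
def isHom {α β : Type} (h : α → β) (I : Inst α) (J : Inst β) : Prop :=
  ∀ a ∈ I, mapAtom h a ∈ J

/-- The instance uses only relation symbols from schema `S`. -/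
def overSchema {D : Type} (S : Finset RelSym) (I : Inst D) : Prop :=
  ∀ a ∈ I, a.1 ∈ S

/-! ### Conjunctive queries -/

/-- A Boolean conjunctive query: a finite list of atoms over variables,
all of which are (implicitly) existentially quantified. -/
abbrev BCQ : Type := List (Atom Var)

def bcqHolds {D : Type} (q : BCQ) (I : Inst D) : Prop :=
  ∃ h : Var → D, ∀ a ∈ q, mapAtom h a ∈ I

def bcqOver (S : Finset RelSym) (q : BCQ) : Prop := ∀ a ∈ q, a.1 ∈ S

/-- The canonical database of a Boolean CQ. -/
def canondb (q : BCQ) : Inst Var := { a | a ∈ q }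

/-- A conjunctive query with answer variables: a body together with the list
of answer (free) variables. -/
abbrev CQ : Type := List (Atom Var) × List Var

def cqEval {D : Type} (q : CQ) (I : Inst D) : Set (List D) :=
  { t | ∃ h : Var → D, (∀ a ∈ q.1, mapAtom h a ∈ I) ∧ t = q.2.map h }

def cqOver (S : Finset RelSym) (q : CQ) : Prop := ∀ a ∈ q.1, a.1 ∈ S

/-- A union of conjunctive queries. -/
abbrev UCQ : Type := List CQ

def ucqEval {D : Type} (q : UCQ) (I : Inst D) : Set (List D) :=
  { t | ∃ d ∈ q, t ∈ cqEval d I }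

def ucqOver (S : Finset RelSym) (q : UCQ) : Prop := ∀ d ∈ q, cqOver S d

/-- A Boolean union of conjunctive queries. -/
abbrev BUCQ : Type := List BCQ

def bucqHolds {D : Type} (q : BUCQ) (I : Inst D) : Prop := ∃ d ∈ q, bcqHolds d I

def bucqOver (S : Finset RelSym) (q : BUCQ) : Prop := ∀ d ∈ q, bcqOver S d

/-! ### Datalog -/

/-- A Datalog rule: a head atom and a body (a list of atoms). -/
abbrev DatalogRule : Type := Atom Var × List (Atom Var)
abbrev DatalogProgram : Type := List DatalogRule
/-- A Datalog query: a program together with a distinguished goal predicate. -/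
abbrev DatalogQuery : Type := DatalogProgram × RelSym

/-- The intensional predicates of a program: those appearing in rule heads. -/
def isIDB (P : DatalogProgram) (r : RelSym) : Prop := ∃ ru ∈ P, ru.1.1 = r

def ruleHolds {D : Type} (r : DatalogRule) (J : Inst D) : Prop :=
  ∀ h : Var → D, (∀ a ∈ r.2, mapAtom h a ∈ J) → mapAtom h r.1 ∈ J

/-- The least extension of `I` satisfying all rules of `P`. -/
def dlFix {D : Type} (P : DatalogProgram) (I : Inst D) : Inst D :=
  ⋂₀ { J : Inst D | I ⊆ J ∧ ∀ r ∈ P, ruleHolds r J }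

/-- Output of a Datalog query. -/
def dlEval {D : Type} (Q : DatalogQuery) (I : Inst D) : Set (List D) :=
  { t | (Q.2, t) ∈ dlFix Q.1 I }

/-- A Boolean Datalog query holds when the 0-ary goal fact is derived. -/
def dlHolds {D : Type} (Q : DatalogQuery) (I : Inst D) : Prop :=
  (Q.2, ([] : List D)) ∈ dlFix Q.1 I

/-- Well-formedness of a Datalog query over base (EDB) schema `S`:
head predicates are disjoint from `S`, body atoms are over `S` or intensional,
and the goal is intensional. -/
def dlOver (S : Finset RelSym) (Q : DatalogQuery) : Prop :=
  (∀ r ∈ Q.1, r.1.1 ∉ S ∧ ∀ a ∈ r.2, a.1 ∈ S ∨ isIDB Q.1 a.1) ∧ isIDB Q.1 Q.2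

/-- The goal predicate is 0-ary (Boolean query). -/
def dlBoolean (Q : DatalogQuery) : Prop :=
  ∀ r ∈ Q.1, r.1.1 = Q.2 → r.1.2 = []

/-- Monadic Datalog: every intensional predicate is unary
(except the 0-ary goal of a Boolean query). -/
def isMDL (Q : DatalogQuery) : Prop :=
  ∀ r ∈ Q.1, (r.1.1 = Q.2 ∧ r.1.2 = []) ∨ r.1.2.length = 1

/-- Frontier-guarded Datalog over EDB schema `S`: every rule body contains
an EDB atom containing all head variables. -/
def isFGDL (S : Finset RelSym) (Q : DatalogQuery) : Prop :=
  ∀ r ∈ Q.1, ∃ a ∈ r.2, a.1 ∈ S ∧ ∀ x ∈ r.1.2, x ∈ a.2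

/-- Extensionally-connected Datalog: in each rule, the graph on the head
variables whose edges join variables co-occurring in an EDB body atom
is connected. -/
def isEC (S : Finset RelSym) (Q : DatalogQuery) : Prop :=
  ∀ r ∈ Q.1, ∀ x ∈ r.1.2, ∀ y ∈ r.1.2,
    Relation.ReflTransGen (fun u v => ∃ a ∈ r.2, a.1 ∈ S ∧ u ∈ a.2 ∧ v ∈ a.2) x y

/-! ### Existential rules (TGDs) -/

/-- A tuple-generating dependency: body and head, each a list of atoms.
Head variables not occurring in the body are existentially quantified. -/
abbrev TGD : Type := List (Atom Var) × List (Atom Var)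

def varsIn (l : List (Atom Var)) : Set Var := { x | ∃ a ∈ l, x ∈ a.2 }

def tgdHolds {D : Type} (τ : TGD) (I : Inst D) : Prop :=
  ∀ h : Var → D, (∀ a ∈ τ.1, mapAtom h a ∈ I) →
    ∃ h' : Var → D, (∀ x ∈ varsIn τ.1, h' x = h x) ∧ ∀ a ∈ τ.2, mapAtom h' a ∈ I

def sigmaHolds {D : Type} (sg : List TGD) (I : Inst D) : Prop :=
  ∀ τ ∈ sg, tgdHolds τ I

def tgdOver (S : Finset RelSym) (τ : TGD) : Prop :=
  (∀ a ∈ τ.1, a.1 ∈ S) ∧ (∀ a ∈ τ.2, a.1 ∈ S)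

/-- The frontier: variables occurring both in body and head. -/
def frontier (τ : TGD) : Set Var := varsIn τ.1 ∩ varsIn τ.2

/-- A linear TGD has a single body atom. -/
def linearTGD (τ : TGD) : Prop := τ.1.length = 1

/-- A frontier-one TGD has (at most) one frontier variable. -/
def frontierOne (τ : TGD) : Prop := (frontier τ).Subsingleton

/-- A frontier-guarded TGD: some body atom contains all frontier variables. -/
def frontierGuarded (τ : TGD) : Prop := ∃ a ∈ τ.1, ∀ x ∈ frontier τ, x ∈ a.2

/-- A full TGD has no existentially quantified head variables. -/
def fullTGD (τ : TGD) : Prop := varsIn τ.2 ⊆ varsIn τ.1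

/-- A Unary Inclusion Dependency: a frontier-one linear TGD with no
repeated variables (and no constants). -/
def isUID (τ : TGD) : Prop :=
  linearTGD τ ∧ frontierOne τ ∧ (∀ a ∈ τ.1, a.2.Nodup) ∧ (∀ a ∈ τ.2, a.2.Nodup)

/-! ### Views -/

abbrev CQViews : Type := List (RelSym × CQ)
abbrev UCQViews : Type := List (RelSym × UCQ)
abbrev DLViews : Type := List (RelSym × DatalogQuery)

def cqViewImage {D : Type} (V : CQViews) (I : Inst D) : Inst D :=
  { a | ∃ vd ∈ V, vd.1 = a.1 ∧ a.2 ∈ cqEval vd.2 I }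

def ucqViewImage {D : Type} (V : UCQViews) (I : Inst D) : Inst D :=
  { a | ∃ vd ∈ V, vd.1 = a.1 ∧ a.2 ∈ ucqEval vd.2 I }

def dlViewImage {D : Type} (V : DLViews) (I : Inst D) : Inst D :=
  { a | ∃ vd ∈ V, vd.1 = a.1 ∧ a.2 ∈ dlEval vd.2 I }

/-! ### Monotonic determinacy and rewritings -/

/-- `holdsQ` is monotonically determined over the views (given by the view-image
operator `vim`) with respect to the rules `sg`, over all (possibly infinite)
instances over schema `S`. -/
def monDet (S : Finset RelSym)
    (holdsQ : (D : Type) → Inst D → Prop)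
    (vim : (D : Type) → Inst D → Inst D)
    (sg : List TGD) : Prop :=
  ∀ (D : Type) (I I' : Inst D), overSchema S I → overSchema S I' →
    sigmaHolds sg I → sigmaHolds sg I' →
    vim D I ⊆ vim D I' → holdsQ D I → holdsQ D I'

/-- Monotonic determinacy over finite instances. -/
def monDetFin (S : Finset RelSym)
    (holdsQ : (D : Type) → Inst D → Prop)
    (vim : (D : Type) → Inst D → Inst D)
    (sg : List TGD) : Prop :=
  ∀ (D : Type) (I I' : Inst D), I.Finite → I'.Finite →
    overSchema S I → overSchema S I' →
    sigmaHolds sg I → sigmaHolds sg I' →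
    vim D I ⊆ vim D I' → holdsQ D I → holdsQ D I'

/-- `holdsR` (a Boolean query over the view schema) is a rewriting of the
Boolean query `holdsQ` w.r.t. the views `vim` and rules `sg`:
on every instance satisfying the rules, evaluating the rewriting on the view
image gives the value of the query. -/
def isRewriting (S : Finset RelSym)
    (holdsQ : (D : Type) → Inst D → Prop)
    (vim : (D : Type) → Inst D → Inst D)
    (sg : List TGD)
    (holdsR : (D : Type) → Inst D → Prop) : Prop :=
  ∀ (D : Type) (I : Inst D), overSchema S I → sigmaHolds sg I →
    (holdsR D (vim D I) ↔ holdsQ D I)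

/-- The finite-instance variant of being a rewriting. -/
def isRewritingFin (S : Finset RelSym)
    (holdsQ : (D : Type) → Inst D → Prop)
    (vim : (D : Type) → Inst D → Inst D)
    (sg : List TGD)
    (holdsR : (D : Type) → Inst D → Prop) : Prop :=
  ∀ (D : Type) (I : Inst D), I.Finite → overSchema S I → sigmaHolds sg I →
    (holdsR D (vim D I) ↔ holdsQ D I)

/-! ### Universal models (the chase), certain answers -/

/-- `C` (with embedding `ι` of the domain of `I`) is a chase/universal model of
`I` with respect to the rules `sg`: it contains a homomorphic image of `I`,
satisfies the rules, and maps homomorphically (compatibly) into every instance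
satisfying the rules and containing a homomorphic image of `I`. -/
def isUnivModel (sg : List TGD) {D E : Type} (I : Inst D) (C : Inst E) (ι : D → E) : Prop :=
  isHom ι I C ∧ sigmaHolds sg C ∧
  ∀ (F : Type) (J : Inst F) (f : D → F), isHom f I J → sigmaHolds sg J →
    ∃ g : E → F, isHom g C J ∧ ∀ d, g (ι d) = f d

/-- `I ∧ sg ⊨ Q`: the Boolean query `holdsQ` holds in every instance (over `S`)
containing (a copy of) `I` and satisfying the rules `sg`. -/
def certain (S : Finset RelSym) (sg : List TGD)
    (holdsQ : (E : Type) → Inst E → Prop) {D : Type} (I : Inst D) : Prop :=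
  ∀ (E : Type) (e : D → E), Function.Injective e →
    ∀ J : Inst E, overSchema S J → mapInst e I ⊆ J → sigmaHolds sg J → holdsQ E J

/-! ### CQ approximations of a Datalog query -/

/-- A CQ approximation of Datalog query `Q`: a Boolean CQ over the base schema
contained in `Q` (Datalog queries are unions of their CQ approximations). -/
def isCQApprox (S : Finset RelSym) (Q : DatalogQuery) (q : BCQ) : Prop :=
  bcqOver S q ∧
  ∀ (D : Type) (I : Inst D), overSchema S I → bcqHolds q I → dlHolds Q I

/-! ### Backward view mapping for UCQ views -/

/-- Assignment used to instantiate the chosen CQ disjunct `q` for the view fact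
`a`: answer variables are identified with the corresponding entries of the fact
tuple, all other variables become fresh nulls tagged by `a`. -/
def backAssign {D : Type} (a : Atom D) (q : CQ) (x : Var) : D ⊕ (Atom D × Var) :=
  if x ∈ q.2 then
    match a.2[q.2.idxOf x]? with
    | some d => Sum.inl d
    | none => Sum.inr (a, x)
  else Sum.inr (a, x)

/-- `BackV_V(J)`: the set of base-schema instances obtained by choosing, for
each view fact of `J`, one CQ disjunct of the corresponding view definition and
adding its canonical database, with answer variables identified with the fact's
tuple and all other variables replaced by fresh nulls. -/
def backV {D : Type} (V : UCQViews) (J : Inst D) : Set (Inst (D ⊕ (Atom D × Var))) :=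
  { K | ∃ choice : Atom D → CQ,
      (∀ a ∈ J, ∃ vd ∈ V, vd.1 = a.1 ∧ choice a ∈ vd.2 ∧ (choice a).2.length = a.2.length) ∧
      K = { b | ∃ a ∈ J, ∃ c ∈ (choice a).1, b = mapAtom (backAssign a (choice a)) c } }

/-! ### Q-entailing view instances -/

/-- A view-schema instance `J` is Q-entailing w.r.t. rules `sg` and the views
(given by view image operator `vim`): every instance over `S` satisfying the
rules whose view image contains (a copy of) `J` satisfies the query. -/
def qEntailing (S : Finset RelSym) (sg : List TGD)
    (vim : (E : Type) → Inst E → Inst E)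
    (holdsQ : (E : Type) → Inst E → Prop)
    {D : Type} (J : Inst D) : Prop :=
  ∀ (E : Type) (e : D → E), Function.Injective e →
    ∀ I : Inst E, overSchema S I → sigmaHolds sg I →
      mapInst e J ⊆ vim E I → holdsQ E I


/-- An instance has treewidth at most `k`: there is a tree decomposition
whose bags have at most `k + 1` elements, every fact's elements lie in a
common bag, and for each element the set of bags containing it is connected. -/
def hasTreewidthLE {D : Type} (I : Inst D) (k : ℕ) : Prop :=
  ∃ (ν : Type) (G : SimpleGraph ν) (bag : ν → Set D),
    G.IsTree ∧
    (∀ v : ν, ∃ s : Finset D, bag v ⊆ ↑s ∧ s.card ≤ k + 1) ∧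
    (∀ a ∈ I, ∃ v : ν, ∀ d ∈ a.2, d ∈ bag v) ∧
    (∀ d : D, (SimpleGraph.induce {v : ν | d ∈ bag v} G).Preconnected)


/-- The bounded treewidth view image property for a Boolean CQ `q` (whose only
CQ approximation is itself): there is `k` such that the instance obtained by
chasing `Canondb q` with the rules and applying the views has treewidth at
most `k`. -/
def btvipCQ (S : Finset RelSym) (q : BCQ) (V : DLViews) (sg : List TGD) : Prop :=
  ∃ k : ℕ, ∃ (E : Type) (C : Inst E) (ι : Var → E),
    isUnivModel sg (canondb q) C ι ∧ overSchema S C ∧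
    hasTreewidthLE (dlViewImage V C) k

/-! ### Auxiliary development -/

section Aux

open Sum

/-- The base schema: `0 = G`, `1 = A`, `2 = U`, `3 = E`, `4 = R`, `5 = T`. -/
def S0 : Finset RelSym := {0, 1, 2, 3, 4, 5}
/-- The view schema: `6 = VE` (copy of `E`), `7 = VW` (reach `U` along `E`). -/
def SV0 : Finset RelSym := {6, 7}

/-- The constraints. -/
def sg0 : List TGD :=
  [ ([((0 : ℕ), ([] : List Var))], [(1, [0])]),              -- G() → ∃x A(x)
    ([((1 : ℕ), [(0 : Var)])], [(3, [0, 1]), (1, [1])]),     -- A(x) → ∃y E(x,y) ∧ A(y)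
    ([((1 : ℕ), [(0 : Var)])], [(2, [0])]),                  -- A(x) → U(x)
    ([((3 : ℕ), [(0 : Var), 1])], [(4, [0, 1])]),            -- E(x,y) → R(x,y)
    ([((4 : ℕ), [(0 : Var), 1]), (3, [0, 2]), (3, [1, 3])], [(4, [2, 3])]),
                                                             -- R(x,y) ∧ E(x,u) ∧ E(y,v) → R(u,v)
    ([((2 : ℕ), [(0 : Var)]), (4, [0, 1])], [(5, [1])]),     -- U(x) ∧ R(x,y) → T(y)
    ([((5 : ℕ), [(0 : Var)]), (3, [0, 1])], [(5, [1])]),     -- T(x) ∧ E(x,y) → T(y)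
    ([((5 : ℕ), [(0 : Var)]), (2, [0])], [(0, [])]) ]        -- T(x) ∧ U(x) → G()

/-- The query: `G()`. -/
def q0 : BCQ := [((0 : ℕ), ([] : List Var))]

/-- View `VE`: copy of `E`. -/
def VE0 : DatalogQuery := ([(((6 : ℕ), [(0 : Var), 1]), [(3, [0, 1])])], 6)
/-- View `VW`: reach `U` along `E`. -/
def VW0 : DatalogQuery :=
  ([(((7 : ℕ), [(0 : Var)]), [(2, [0])]),
    (((7 : ℕ), [(0 : Var)]), [(3, [0, 1]), (7, [1])])], 7)

def V0 : DLViews := [(6, VE0), (7, VW0)]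

/-! #### Generic facts about `dlFix` -/

lemma subset_dlFix {D : Type} (P : DatalogProgram) (I : Inst D) : I ⊆ dlFix P I :=
  fun a ha => Set.mem_sInter.2 fun _ hJ => hJ.1 ha

lemma dlFix_subset {D : Type} {P : DatalogProgram} {I J : Inst D}
    (hIJ : I ⊆ J) (hrules : ∀ r ∈ P, ruleHolds r J) : dlFix P I ⊆ J :=
  Set.sInter_subset_of_mem ⟨hIJ, hrules⟩

lemma ruleHolds_dlFix {D : Type} {P : DatalogProgram} {r : DatalogRule}
    (hr : r ∈ P) (I : Inst D) : ruleHolds r (dlFix P I) := by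
  intro h hb
  refine Set.mem_sInter.2 fun J hJ => ?_
  exact hJ.2 r hr h (fun a ha => Set.mem_sInter.1 (hb a ha) J hJ)

lemma dlFix_mono {D : Type} (P : DatalogProgram) {I I' : Inst D} (h : I ⊆ I') :
    dlFix P I ⊆ dlFix P I' := by
  intro a ha
  refine Set.mem_sInter.2 fun J hJ => ?_
  exact Set.mem_sInter.1 ha J ⟨h.trans hJ.1, hJ.2⟩

lemma dlFix_compact {D : Type} {P : DatalogProgram} {I : Inst D} {a : Atom D}
    (ha : a ∈ dlFix P I) : ∃ I₀ : Inst D, I₀ ⊆ I ∧ I₀.Finite ∧ a ∈ dlFix P I₀ := by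
  classical
  set K : Inst D := {b | ∃ I₀ : Inst D, I₀ ⊆ I ∧ I₀.Finite ∧ b ∈ dlFix P I₀} with hK
  have hsub : dlFix P I ⊆ K := by
    apply dlFix_subset
    · intro b hb
      exact ⟨{b}, by simpa using hb, Set.finite_singleton b, subset_dlFix _ _ rfl⟩
    · intro r hr h hbody
      have hall : ∀ x : Atom Var, ∃ I₀ : Inst D,
          I₀ ⊆ I ∧ I₀.Finite ∧ (x ∈ r.2 → mapAtom h x ∈ dlFix P I₀) := by
        intro x
        by_cases hx : x ∈ r.2
        · obtain ⟨I₀, h1, h2, h3⟩ := hbody x hx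
          exact ⟨I₀, h1, h2, fun _ => h3⟩
        · exact ⟨∅, by simp, Set.finite_empty, fun hx' => absurd hx' hx⟩
      choose F hFsub hFfin hFmem using hall
      refine ⟨⋃ x ∈ {y | y ∈ r.2}, F x, ?_, ?_, ?_⟩
      · exact Set.iUnion₂_subset fun x _ => hFsub x
      · exact Set.Finite.biUnion (r.2.finite_toSet) (fun x _ => hFfin x)
      · apply ruleHolds_dlFix hr
        intro x hx
        have hsub2 : F x ⊆ ⋃ y ∈ {y | y ∈ r.2}, F y :=
          fun z hz => Set.mem_biUnion (show x ∈ {y | y ∈ r.2} from hx) hz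
        exact dlFix_mono P hsub2 (hFmem x hx)
  exact hsub ha

lemma dlHolds_mono {D : Type} {R : DatalogQuery} {J J' : Inst D}
    (h : J ⊆ J') (hd : dlHolds R J) : dlHolds R J' := dlFix_mono _ h hd

lemma dlHolds_compact {D : Type} {R : DatalogQuery} {J : Inst D} (hd : dlHolds R J) :
    ∃ J₀ : Inst D, J₀ ⊆ J ∧ J₀.Finite ∧ dlHolds R J₀ := dlFix_compact hd

end Aux
section Aux2

/-- `u` has an `E`-path to a `U`-node in `I`. -/
def reachU {D : Type} (I : Inst D) (u : D) : Prop :=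
  ∃ (k : ℕ) (p : ℕ → D), p 0 = u ∧ (∀ j < k, ((3 : ℕ), [p j, p (j+1)]) ∈ I) ∧
    ((2 : ℕ), [p k]) ∈ I

lemma ve_in_vim {D : Type} {I : Inst D} {u v : D} (h : ((3 : ℕ), [u, v]) ∈ I) :
    ((6 : ℕ), [u, v]) ∈ dlViewImage V0 I := by
  refine ⟨(6, VE0), by simp [V0], rfl, ?_⟩
  show ((6 : ℕ), [u, v]) ∈ dlFix VE0.1 I
  refine Set.mem_sInter.2 fun J hJ => ?_
  have hr := hJ.2 _ (show (((6 : ℕ), [(0 : Var), 1]), [((3 : ℕ), [(0 : Var), 1])]) ∈ VE0.1 by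
    simp [VE0])
  have := hr (fun t => if t = 0 then u else v) ?_
  · simpa [mapAtom] using this
  · intro a ha
    simp only [List.mem_singleton] at ha
    subst ha
    simpa [mapAtom] using hJ.1 h

lemma vw_fix {D : Type} {I : Inst D} :
    ∀ (k : ℕ) (p : ℕ → D), (∀ j < k, ((3 : ℕ), [p j, p (j+1)]) ∈ I) →
      ((2 : ℕ), [p k]) ∈ I → ((7 : ℕ), [p 0]) ∈ dlFix VW0.1 I := by
  intro k
  induction k with
  | zero =>
    intro p _ hend
    have hr := ruleHolds_dlFix (P := VW0.1)
      (r := (((7 : ℕ), [(0 : Var)]), [((2 : ℕ), [(0 : Var)])])) (by decide) I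
    have := hr (fun _ => p 0) ?_
    · simpa [mapAtom] using this
    · intro a ha
      simp only [List.mem_singleton] at ha
      subst ha
      simpa [mapAtom] using subset_dlFix _ _ hend
  | succ k ih =>
    intro p hedge hend
    have h1 : ((7 : ℕ), [p 1]) ∈ dlFix VW0.1 I := by
      have := ih (fun j => p (j+1)) (fun j hj => hedge (j+1) (by omega)) hend
      simpa using this
    have hr := ruleHolds_dlFix (P := VW0.1)
      (r := (((7 : ℕ), [(0 : Var)]), [((3 : ℕ), [(0 : Var), 1]), ((7 : ℕ), [(1 : Var)])]))
      (by decide) I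
    have := hr (fun t => if t = 0 then p 0 else p 1) ?_
    · simpa [mapAtom] using this
    · intro a ha
      simp only [List.mem_cons, List.mem_singleton, List.not_mem_nil, or_false] at ha
      rcases ha with ha | ha <;> subst ha
      · simpa [mapAtom] using subset_dlFix _ _ (hedge 0 (by omega))
      · simpa [mapAtom] using h1

lemma vw_in_vim {D : Type} {I : Inst D} {u : D} (h : reachU I u) :
    ((7 : ℕ), [u]) ∈ dlViewImage V0 I := by
  obtain ⟨k, p, hp0, hedge, hend⟩ := h
  refine ⟨(7, VW0), by simp [V0], rfl, ?_⟩
  show ((7 : ℕ), [u]) ∈ dlFix VW0.1 I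
  have := vw_fix k p hedge hend
  rwa [hp0] at this

lemma vim_inv {D : Type} {I : Inst D} (hS : overSchema S0 I) {a : Atom D}
    (ha : a ∈ dlViewImage V0 I) :
    (∃ u v, a = ((6 : ℕ), [u, v]) ∧ ((3 : ℕ), [u, v]) ∈ I) ∨
      (∃ u, a = ((7 : ℕ), [u]) ∧ reachU I u) := by
  obtain ⟨vd, hvd, hfst, ht⟩ := ha
  obtain ⟨ra, ta⟩ := a
  have hvd' : vd = ((6 : ℕ), VE0) ∨ vd = ((7 : ℕ), VW0) := by
    simpa [V0] using hvd
  rcases hvd' with rfl | rfl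
  · -- VE view
    left
    simp only at hfst
    subst hfst
    have hfix : ((6 : ℕ), ta) ∈ dlFix VE0.1 I := ht
    set Jst : Inst D := I ∪ {b | ∃ u v, b = ((6 : ℕ), [u, v]) ∧ ((3 : ℕ), [u, v]) ∈ I}
      with hJst
    have hsub : dlFix VE0.1 I ⊆ Jst := by
      apply dlFix_subset Set.subset_union_left
      intro r hr
      simp only [VE0, List.mem_singleton] at hr
      subst hr
      intro h hb
      have hbody := hb _ (List.mem_singleton.2 rfl)
      simp only [mapAtom, List.map] at hbody
      have hbody' : ((3 : ℕ), [h 0, h 1]) ∈ I := by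
        rcases hbody with hI | hadd
        · exact hI
        · obtain ⟨u, v, heq, _⟩ := hadd
          simp at heq
      right
      exact ⟨h 0, h 1, by simp [mapAtom], hbody'⟩
    have := hsub hfix
    rcases this with hI | hadd
    · exact absurd (hS _ hI) (show ¬ ((6:ℕ) ∈ S0) by decide)
    · obtain ⟨u, v, heq, hE⟩ := hadd
      exact ⟨u, v, heq, hE⟩
  · -- VW view
    right
    simp only at hfst
    subst hfst
    have hfix : ((7 : ℕ), ta) ∈ dlFix VW0.1 I := ht
    set Jst : Inst D := I ∪ {b | ∃ u, b = ((7 : ℕ), [u]) ∧ reachU I u} with hJst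
    have hsub : dlFix VW0.1 I ⊆ Jst := by
      apply dlFix_subset Set.subset_union_left
      intro r hr
      simp only [VW0, List.mem_cons, List.mem_singleton, List.not_mem_nil, or_false] at hr
      rcases hr with hr | hr <;> subst hr
      · -- base rule
        intro h hb
        have hbody := hb _ (List.mem_singleton.2 rfl)
        simp only [mapAtom, List.map] at hbody
        have hbody' : ((2 : ℕ), [h 0]) ∈ I := by
          rcases hbody with hI | hadd
          · exact hI
          · obtain ⟨u, heq, _⟩ := hadd
            simp at heq
        right
        exact ⟨h 0, by simp [mapAtom], 0, fun _ => h 0, rfl, by omega, hbody'⟩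
      · -- recursive rule
        intro h hb
        have hb1 := hb ((3 : ℕ), [(0 : Var), 1]) (by simp)
        have hb2 := hb ((7 : ℕ), [(1 : Var)]) (by simp)
        simp only [mapAtom, List.map] at hb1 hb2
        have hE : ((3 : ℕ), [h 0, h 1]) ∈ I := by
          rcases hb1 with hI | hadd
          · exact hI
          · obtain ⟨u, heq, _⟩ := hadd
            simp at heq
        have hW : reachU I (h 1) := by
          rcases hb2 with hI | hadd
          · exact absurd (hS _ hI) (show ¬ ((7:ℕ) ∈ S0) by decide)
          · obtain ⟨u, heq, hu⟩ := hadd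
            simp only [Prod.mk.injEq, List.cons.injEq, and_true] at heq
            rwa [← heq.2] at hu
        obtain ⟨k, p, hp0, hedge, hend⟩ := hW
        right
        refine ⟨h 0, by simp [mapAtom], k + 1, fun j => if j = 0 then h 0 else p (j - 1),
          rfl, ?_, by simpa⟩
        intro j hj
        cases j with
        | zero => simpa [hp0] using hE
        | succ i =>
          have : i < k := by omega
          simpa using hedge i this
    have := hsub hfix
    rcases this with hI | hadd
    · exact absurd (hS _ hI) (show ¬ ((7:ℕ) ∈ S0) by decide)
    · obtain ⟨u, heq, hu⟩ := hadd
      exact ⟨u, heq, hu⟩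

end Aux2
section Aux3

variable {D : Type} {I : Inst D}

lemma varsIn_tau1 : ∀ x ∈ varsIn [((1 : ℕ), [(0 : Var)])], x = 0 := by
  intro x hx
  simp only [varsIn, Set.mem_setOf_eq, List.mem_singleton] at hx
  obtain ⟨a, rfl, hxa⟩ := hx
  simpa using hxa

lemma tau0_app (hsig : sigmaHolds sg0 I) (d : D) (hG : ((0 : ℕ), ([] : List D)) ∈ I) :
    ∃ x, ((1 : ℕ), [x]) ∈ I := by
  have ht := hsig _ (show ([((0 : ℕ), ([] : List Var))], [((1 : ℕ), [(0 : Var)])]) ∈ sg0 by decide)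
  have := ht (fun _ => d) ?_
  · obtain ⟨h', _, hhead⟩ := this
    have := hhead _ (List.mem_singleton.2 rfl)
    exact ⟨h' 0, by simpa [mapAtom] using this⟩
  · intro a ha
    simp only [List.mem_singleton] at ha
    subst ha
    simpa [mapAtom] using hG

lemma tau1_app (hsig : sigmaHolds sg0 I) {x : D} (hA : ((1 : ℕ), [x]) ∈ I) :
    ∃ y, ((3 : ℕ), [x, y]) ∈ I ∧ ((1 : ℕ), [y]) ∈ I := by
  have ht := hsig _ (show ([((1 : ℕ), [(0 : Var)])], [((3 : ℕ), [(0 : Var), 1]), ((1 : ℕ), [(1 : Var)])]) ∈ sg0 by decide)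
  have := ht (fun _ => x) ?_
  · obtain ⟨h', hag, hhead⟩ := this
    have h0 : h' 0 = x := hag 0 ⟨((1 : ℕ), [(0 : Var)]), by simp, by simp⟩
    have h1 := hhead _ (show ((3 : ℕ), [(0 : Var), 1]) ∈ _ by simp)
    have h2 := hhead _ (show ((1 : ℕ), [(1 : Var)]) ∈ _ by simp)
    refine ⟨h' 1, ?_, ?_⟩
    · simpa [mapAtom, h0] using h1
    · simpa [mapAtom] using h2
  · intro a ha
    simp only [List.mem_singleton] at ha
    subst ha
    simpa [mapAtom] using hA

/-- Generic application of a full TGD of `sg0`. -/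
lemma full_app (hsig : sigmaHolds sg0 I) {τ : TGD} (hτ : τ ∈ sg0)
    (hfull : ∀ a ∈ τ.2, ∀ x ∈ a.2, x ∈ varsIn τ.1)
    (h : Var → D) (hbody : ∀ a ∈ τ.1, mapAtom h a ∈ I) :
    ∀ a ∈ τ.2, mapAtom h a ∈ I := by
  obtain ⟨h', hag, hhead⟩ := hsig τ hτ h hbody
  intro a ha
  have : mapAtom h' a = mapAtom h a := by
    unfold mapAtom
    refine congrArg _ (List.map_congr_left ?_)
    intro x hx
    exact hag x (hfull a ha x hx)
  rw [← this]
  exact hhead a ha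

lemma tau2_app (hsig : sigmaHolds sg0 I) {x : D} (hA : ((1 : ℕ), [x]) ∈ I) :
    ((2 : ℕ), [x]) ∈ I := by
  have := full_app hsig (τ := ([((1 : ℕ), [(0 : Var)])], [((2 : ℕ), [(0 : Var)])]))
    (by decide) (by intro a ha x hx; simp [varsIn]; simp at ha; subst ha; simpa using hx)
    (fun _ => x) ?_ _ (List.mem_singleton.2 rfl)
  · simpa [mapAtom] using this
  · intro a ha
    simp only [List.mem_singleton] at ha
    subst ha
    simpa [mapAtom] using hA

lemma tau3_app (hsig : sigmaHolds sg0 I) {x y : D} (hE : ((3 : ℕ), [x, y]) ∈ I) :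
    ((4 : ℕ), [x, y]) ∈ I := by
  have := full_app hsig (τ := ([((3 : ℕ), [(0 : Var), 1])], [((4 : ℕ), [(0 : Var), 1])]))
    (by decide) (by intro a ha z hz; simp at ha; subst ha; simp at hz
                    rcases hz with rfl | rfl <;> simp [varsIn])
    (fun t => if t = 0 then x else y) ?_ _ (List.mem_singleton.2 rfl)
  · simpa [mapAtom] using this
  · intro a ha
    simp only [List.mem_singleton] at ha
    subst ha
    simpa [mapAtom] using hE

lemma tau4_app (hsig : sigmaHolds sg0 I) {x y u v : D} (hR : ((4 : ℕ), [x, y]) ∈ I)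
    (hE1 : ((3 : ℕ), [x, u]) ∈ I) (hE2 : ((3 : ℕ), [y, v]) ∈ I) :
    ((4 : ℕ), [u, v]) ∈ I := by
  have := full_app hsig
    (τ := ([((4 : ℕ), [(0 : Var), 1]), ((3 : ℕ), [(0 : Var), 2]), ((3 : ℕ), [(1 : Var), 3])],
           [((4 : ℕ), [(2 : Var), 3])]))
    (by decide)
    (by intro a ha z hz; simp at ha; subst ha; simp at hz
        rcases hz with rfl | rfl
        · exact ⟨((3 : ℕ), [(0 : Var), 2]), by simp, by simp⟩
        · exact ⟨((3 : ℕ), [(1 : Var), 3]), by simp, by simp⟩)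
    (fun t => if t = 0 then x else if t = 1 then y else if t = 2 then u else v) ?_
    _ (List.mem_singleton.2 rfl)
  · simpa [mapAtom] using this
  · intro a ha
    simp only [List.mem_cons, List.mem_singleton, List.not_mem_nil, or_false] at ha
    rcases ha with rfl | rfl | rfl
    · simpa [mapAtom] using hR
    · simpa [mapAtom] using hE1
    · simpa [mapAtom] using hE2

lemma tau5_app (hsig : sigmaHolds sg0 I) {x y : D} (hU : ((2 : ℕ), [x]) ∈ I)
    (hR : ((4 : ℕ), [x, y]) ∈ I) : ((5 : ℕ), [y]) ∈ I := by
  have := full_app hsig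
    (τ := ([((2 : ℕ), [(0 : Var)]), ((4 : ℕ), [(0 : Var), 1])], [((5 : ℕ), [(1 : Var)])]))
    (by decide)
    (by intro a ha z hz; simp at ha; subst ha; simp at hz; subst hz
        exact ⟨((4 : ℕ), [(0 : Var), 1]), by simp, by simp⟩)
    (fun t => if t = 0 then x else y) ?_ _ (List.mem_singleton.2 rfl)
  · simpa [mapAtom] using this
  · intro a ha
    simp only [List.mem_cons, List.mem_singleton, List.not_mem_nil, or_false] at ha
    rcases ha with rfl | rfl
    · simpa [mapAtom] using hU
    · simpa [mapAtom] using hR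

lemma tau6_app (hsig : sigmaHolds sg0 I) {x y : D} (hT : ((5 : ℕ), [x]) ∈ I)
    (hE : ((3 : ℕ), [x, y]) ∈ I) : ((5 : ℕ), [y]) ∈ I := by
  have := full_app hsig
    (τ := ([((5 : ℕ), [(0 : Var)]), ((3 : ℕ), [(0 : Var), 1])], [((5 : ℕ), [(1 : Var)])]))
    (by decide)
    (by intro a ha z hz; simp at ha; subst ha; simp at hz; subst hz
        exact ⟨((3 : ℕ), [(0 : Var), 1]), by simp, by simp⟩)
    (fun t => if t = 0 then x else y) ?_ _ (List.mem_singleton.2 rfl)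
  · simpa [mapAtom] using this
  · intro a ha
    simp only [List.mem_cons, List.mem_singleton, List.not_mem_nil, or_false] at ha
    rcases ha with rfl | rfl
    · simpa [mapAtom] using hT
    · simpa [mapAtom] using hE

lemma tau7_app (hsig : sigmaHolds sg0 I) {x : D} (hT : ((5 : ℕ), [x]) ∈ I)
    (hU : ((2 : ℕ), [x]) ∈ I) : ((0 : ℕ), ([] : List D)) ∈ I := by
  have := full_app hsig
    (τ := ([((5 : ℕ), [(0 : Var)]), ((2 : ℕ), [(0 : Var)])], [((0 : ℕ), ([] : List Var))]))
    (by decide)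
    (by intro a ha z hz; simp at ha; subst ha; simp at hz)
    (fun _ => x) ?_ _ (List.mem_singleton.2 rfl)
  · simpa [mapAtom] using this
  · intro a ha
    simp only [List.mem_cons, List.mem_singleton, List.not_mem_nil, or_false] at ha
    rcases ha with rfl | rfl
    · simpa [mapAtom] using hT
    · simpa [mapAtom] using hU

/-- From the goal fact, `sg0` forces an infinite `A`-chain. -/
lemma chain_exists (hsig : sigmaHolds sg0 I) (d : D) (hG : ((0 : ℕ), ([] : List D)) ∈ I) :
    ∃ c : ℕ → D, ∀ n, ((1 : ℕ), [c n]) ∈ I ∧ ((3 : ℕ), [c n, c (n+1)]) ∈ I := by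
  obtain ⟨a0, ha0⟩ := tau0_app hsig d hG
  have step : ∀ x, ((1 : ℕ), [x]) ∈ I → ∃ y, ((3 : ℕ), [x, y]) ∈ I ∧ ((1 : ℕ), [y]) ∈ I :=
    fun x hx => tau1_app hsig hx
  choose f hf1 hf2 using step
  let c : ℕ → {x : D // ((1 : ℕ), [x]) ∈ I} :=
    fun n => Nat.rec ⟨a0, ha0⟩ (fun _ p => ⟨f p.1 p.2, hf2 p.1 p.2⟩) n
  refine ⟨fun n => (c n).1, fun n => ⟨(c n).2, ?_⟩⟩
  exact hf1 (c n).1 (c n).2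

end Aux3
section Aux4

open Sum

/-- The canonical "chase" model: an infinite chain. -/
def Cmod : Inst (ℕ ⊕ ℕ) :=
  { a | a = ((0 : ℕ), []) ∨ (∃ n, a = ((1 : ℕ), [Sum.inr n])) ∨
        (∃ n, a = ((2 : ℕ), [Sum.inr n])) ∨ (∃ n, a = ((5 : ℕ), [Sum.inr (n+1)])) ∨
        (∃ n, a = ((3 : ℕ), [Sum.inr n, Sum.inr (n+1)])) ∨
        (∃ n, a = ((4 : ℕ), [Sum.inr n, Sum.inr (n+1)])) }

lemma Cmod_over : overSchema S0 Cmod := by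
  rintro a (rfl | ⟨n, rfl⟩ | ⟨n, rfl⟩ | ⟨n, rfl⟩ | ⟨n, rfl⟩ | ⟨n, rfl⟩) <;> simp [S0]

lemma Cmod_inv1 {l : List (ℕ ⊕ ℕ)} (h : ((1 : ℕ), l) ∈ Cmod) : ∃ n, l = [Sum.inr n] := by
  rcases h with h | ⟨n, h⟩ | ⟨n, h⟩ | ⟨n, h⟩ | ⟨n, h⟩ | ⟨n, h⟩ <;>
    simp only [Prod.mk.injEq] at h
  · exact absurd h.1 (by decide)
  · exact ⟨n, h.2⟩
  · exact absurd h.1 (by decide)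
  · exact absurd h.1 (by decide)
  · exact absurd h.1 (by decide)
  · exact absurd h.1 (by decide)

lemma Cmod_inv2 {l : List (ℕ ⊕ ℕ)} (h : ((2 : ℕ), l) ∈ Cmod) : ∃ n, l = [Sum.inr n] := by
  rcases h with h | ⟨n, h⟩ | ⟨n, h⟩ | ⟨n, h⟩ | ⟨n, h⟩ | ⟨n, h⟩ <;>
    simp only [Prod.mk.injEq] at h
  · exact absurd h.1 (by decide)
  · exact absurd h.1 (by decide)
  · exact ⟨n, h.2⟩
  · exact absurd h.1 (by decide)
  · exact absurd h.1 (by decide)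
  · exact absurd h.1 (by decide)

lemma Cmod_inv5 {l : List (ℕ ⊕ ℕ)} (h : ((5 : ℕ), l) ∈ Cmod) : ∃ n, l = [Sum.inr (n+1)] := by
  rcases h with h | ⟨n, h⟩ | ⟨n, h⟩ | ⟨n, h⟩ | ⟨n, h⟩ | ⟨n, h⟩ <;>
    simp only [Prod.mk.injEq] at h
  · exact absurd h.1 (by decide)
  · exact absurd h.1 (by decide)
  · exact absurd h.1 (by decide)
  · exact ⟨n, h.2⟩
  · exact absurd h.1 (by decide)
  · exact absurd h.1 (by decide)

lemma Cmod_inv3 {l : List (ℕ ⊕ ℕ)} (h : ((3 : ℕ), l) ∈ Cmod) :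
    ∃ n, l = [Sum.inr n, Sum.inr (n+1)] := by
  rcases h with h | ⟨n, h⟩ | ⟨n, h⟩ | ⟨n, h⟩ | ⟨n, h⟩ | ⟨n, h⟩ <;>
    simp only [Prod.mk.injEq] at h
  · exact absurd h.1 (by decide)
  · exact absurd h.1 (by decide)
  · exact absurd h.1 (by decide)
  · exact absurd h.1 (by decide)
  · exact ⟨n, h.2⟩
  · exact absurd h.1 (by decide)

lemma Cmod_inv4 {l : List (ℕ ⊕ ℕ)} (h : ((4 : ℕ), l) ∈ Cmod) :
    ∃ n, l = [Sum.inr n, Sum.inr (n+1)] := by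
  rcases h with h | ⟨n, h⟩ | ⟨n, h⟩ | ⟨n, h⟩ | ⟨n, h⟩ | ⟨n, h⟩ <;>
    simp only [Prod.mk.injEq] at h
  · exact absurd h.1 (by decide)
  · exact absurd h.1 (by decide)
  · exact absurd h.1 (by decide)
  · exact absurd h.1 (by decide)
  · exact absurd h.1 (by decide)
  · exact ⟨n, h.2⟩

lemma Cmod_sigma : sigmaHolds sg0 Cmod := by
  intro τ hτ
  simp only [sg0, List.mem_cons, List.not_mem_nil, or_false] at hτ
  rcases hτ with rfl | rfl | rfl | rfl | rfl | rfl | rfl | rfl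
  · -- τ0 : G → ∃x A(x)
    intro h _
    refine ⟨fun _ => Sum.inr 0, ?_, ?_⟩
    · intro x hx
      exact absurd hx (by simp [varsIn])
    · intro a ha
      simp only [List.mem_singleton] at ha
      subst ha
      exact Or.inr (Or.inl ⟨0, by simp [mapAtom]⟩)
  · -- τ1 : A(x) → ∃y E(x,y) ∧ A(y)
    intro h hb
    have hA : ((1 : ℕ), [h 0]) ∈ Cmod := by
      simpa [mapAtom] using hb _ (List.mem_singleton.2 rfl)
    obtain ⟨n, hn⟩ := Cmod_inv1 hA
    have h0 : h 0 = Sum.inr n := by simpa using hn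
    refine ⟨fun t => if t = 0 then Sum.inr n else Sum.inr (n+1), ?_, ?_⟩
    · intro x hx
      have := varsIn_tau1 x hx
      subst this
      simp [h0]
    · intro a ha
      simp only [List.mem_cons, List.mem_singleton, List.not_mem_nil, or_false] at ha
      rcases ha with rfl | rfl
      · exact Or.inr (Or.inr (Or.inr (Or.inr (Or.inl ⟨n, by simp [mapAtom]⟩))))
      · exact Or.inr (Or.inl ⟨n+1, by simp [mapAtom]⟩)
  · -- τ2 : A(x) → U(x)
    intro h hb
    have hA : ((1 : ℕ), [h 0]) ∈ Cmod := by
      simpa [mapAtom] using hb _ (List.mem_singleton.2 rfl)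
    obtain ⟨n, hn⟩ := Cmod_inv1 hA
    have h0 : h 0 = Sum.inr n := by simpa using hn
    refine ⟨h, fun _ _ => rfl, ?_⟩
    intro a ha
    simp only [List.mem_singleton] at ha
    subst ha
    exact Or.inr (Or.inr (Or.inl ⟨n, by simp [mapAtom, h0]⟩))
  · -- τ3 : E(x,y) → R(x,y)
    intro h hb
    have hE : ((3 : ℕ), [h 0, h 1]) ∈ Cmod := by
      simpa [mapAtom] using hb _ (List.mem_singleton.2 rfl)
    obtain ⟨n, hn⟩ := Cmod_inv3 hE
    simp only [List.cons.injEq, and_true] at hn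
    refine ⟨h, fun _ _ => rfl, ?_⟩
    intro a ha
    simp only [List.mem_singleton] at ha
    subst ha
    exact Or.inr (Or.inr (Or.inr (Or.inr (Or.inr ⟨n, by simp [mapAtom, hn.1, hn.2]⟩))))
  · -- τ4
    intro h hb
    have hR : ((4 : ℕ), [h 0, h 1]) ∈ Cmod := by
      simpa [mapAtom] using hb ((4 : ℕ), [(0 : Var), 1]) (by simp)
    have hE1 : ((3 : ℕ), [h 0, h 2]) ∈ Cmod := by
      simpa [mapAtom] using hb ((3 : ℕ), [(0 : Var), 2]) (by simp)
    have hE2 : ((3 : ℕ), [h 1, h 3]) ∈ Cmod := by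
      simpa [mapAtom] using hb ((3 : ℕ), [(1 : Var), 3]) (by simp)
    obtain ⟨n, hn⟩ := Cmod_inv4 hR
    obtain ⟨m, hm⟩ := Cmod_inv3 hE1
    obtain ⟨l, hl⟩ := Cmod_inv3 hE2
    simp only [List.cons.injEq, and_true] at hn hm hl
    have hmn : m = n := by
      have := hm.1.symm.trans hn.1
      exact Sum.inr_injective this
    have hln : l = n + 1 := by
      have := hl.1.symm.trans hn.2
      exact Sum.inr_injective this
    refine ⟨h, fun _ _ => rfl, ?_⟩
    intro a ha
    simp only [List.mem_singleton] at ha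
    subst ha
    refine Or.inr (Or.inr (Or.inr (Or.inr (Or.inr ⟨n+1, ?_⟩))))
    simp [mapAtom]
    constructor
    · rw [hm.2, hmn]
    · rw [hl.2, hln]
  · -- τ5 : U(x) ∧ R(x,y) → T(y)
    intro h hb
    have hU : ((2 : ℕ), [h 0]) ∈ Cmod := by
      simpa [mapAtom] using hb ((2 : ℕ), [(0 : Var)]) (by simp)
    have hR : ((4 : ℕ), [h 0, h 1]) ∈ Cmod := by
      simpa [mapAtom] using hb ((4 : ℕ), [(0 : Var), 1]) (by simp)
    obtain ⟨n, hn⟩ := Cmod_inv4 hR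
    simp only [List.cons.injEq, and_true] at hn
    refine ⟨h, fun _ _ => rfl, ?_⟩
    intro a ha
    simp only [List.mem_singleton] at ha
    subst ha
    exact Or.inr (Or.inr (Or.inr (Or.inl ⟨n, by simp [mapAtom, hn.2]⟩)))
  · -- τ6 : T(x) ∧ E(x,y) → T(y)
    intro h hb
    have hE : ((3 : ℕ), [h 0, h 1]) ∈ Cmod := by
      simpa [mapAtom] using hb ((3 : ℕ), [(0 : Var), 1]) (by simp)
    obtain ⟨n, hn⟩ := Cmod_inv3 hE
    simp only [List.cons.injEq, and_true] at hn
    refine ⟨h, fun _ _ => rfl, ?_⟩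
    intro a ha
    simp only [List.mem_singleton] at ha
    subst ha
    exact Or.inr (Or.inr (Or.inr (Or.inl ⟨n, by simp [mapAtom, hn.2]⟩)))
  · -- τ7 : T(x) ∧ U(x) → G
    intro h _
    refine ⟨h, fun _ _ => rfl, ?_⟩
    intro a ha
    simp only [List.mem_singleton] at ha
    subst ha
    exact Or.inl (by simp [mapAtom])

/-- The query is true in `Cmod`. -/
lemma Cmod_q : bcqHolds q0 Cmod := by
  refine ⟨fun _ => Sum.inr 0, ?_⟩
  intro a ha
  simp only [q0, List.mem_singleton] at ha
  subst ha
  exact Or.inl (by simp [mapAtom])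

/-- The counter-model: a finite chain of length `M` with `U` only at the end. -/
def Iminus (M : ℕ) : Inst (ℕ ⊕ ℕ) :=
  { a | (∃ n, n < M ∧ a = ((3 : ℕ), [Sum.inr n, Sum.inr (n+1)])) ∨
        (∃ n, n < M ∧ a = ((4 : ℕ), [Sum.inr n, Sum.inr (n+1)])) ∨
        a = ((2 : ℕ), [Sum.inr M]) }

lemma Iminus_over (M : ℕ) : overSchema S0 (Iminus M) := by
  rintro a (⟨n, _, rfl⟩ | ⟨n, _, rfl⟩ | rfl) <;> simp [S0]

lemma Iminus_not_q (M : ℕ) : ¬ bcqHolds q0 (Iminus M) := by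
  rintro ⟨h, hall⟩
  have := hall _ (show ((0 : ℕ), ([] : List Var)) ∈ q0 by simp [q0])
  simp only [mapAtom, List.map] at this
  rcases this with (⟨n, _, hc⟩ | ⟨n, _, hc⟩ | hc) <;>
    simp only [Prod.mk.injEq] at hc
  · exact absurd hc.1 (by decide)
  · exact absurd hc.1 (by decide)
  · exact absurd hc.1 (by decide)

lemma Iminus_sigma (M : ℕ) : sigmaHolds sg0 (Iminus M) := by
  have inv0 : ∀ l, ((0 : ℕ), l) ∈ Iminus M → False := by
    rintro l (⟨n, _, hc⟩ | ⟨n, _, hc⟩ | hc) <;> simp only [Prod.mk.injEq] at hc <;>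
      exact absurd hc.1 (by decide)
  have inv1 : ∀ l, ((1 : ℕ), l) ∈ Iminus M → False := by
    rintro l (⟨n, _, hc⟩ | ⟨n, _, hc⟩ | hc) <;> simp only [Prod.mk.injEq] at hc <;>
      exact absurd hc.1 (by decide)
  have inv5 : ∀ l, ((5 : ℕ), l) ∈ Iminus M → False := by
    rintro l (⟨n, _, hc⟩ | ⟨n, _, hc⟩ | hc) <;> simp only [Prod.mk.injEq] at hc <;>
      exact absurd hc.1 (by decide)
  have inv2 : ∀ l, ((2 : ℕ), l) ∈ Iminus M → l = [Sum.inr M] := by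
    rintro l (⟨n, _, hc⟩ | ⟨n, _, hc⟩ | hc) <;> simp only [Prod.mk.injEq] at hc
    · exact absurd hc.1 (by decide)
    · exact absurd hc.1 (by decide)
    · exact hc.2
  have inv3 : ∀ l, ((3 : ℕ), l) ∈ Iminus M →
      ∃ n, n < M ∧ l = [Sum.inr n, Sum.inr (n+1)] := by
    rintro l (⟨n, hn, hc⟩ | ⟨n, _, hc⟩ | hc) <;> simp only [Prod.mk.injEq] at hc
    · exact ⟨n, hn, hc.2⟩
    · exact absurd hc.1 (by decide)
    · exact absurd hc.1 (by decide)
  have inv4 : ∀ l, ((4 : ℕ), l) ∈ Iminus M →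
      ∃ n, n < M ∧ l = [Sum.inr n, Sum.inr (n+1)] := by
    rintro l (⟨n, _, hc⟩ | ⟨n, hn, hc⟩ | hc) <;> simp only [Prod.mk.injEq] at hc
    · exact absurd hc.1 (by decide)
    · exact ⟨n, hn, hc.2⟩
    · exact absurd hc.1 (by decide)
  intro τ hτ
  simp only [sg0, List.mem_cons, List.not_mem_nil, or_false] at hτ
  rcases hτ with rfl | rfl | rfl | rfl | rfl | rfl | rfl | rfl
  · -- τ0
    intro h hb
    exact absurd (by simpa [mapAtom] using hb _ (List.mem_singleton.2 rfl)) (inv0 [])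
  · -- τ1
    intro h hb
    exact absurd (by simpa [mapAtom] using hb _ (List.mem_singleton.2 rfl)) (inv1 _)
  · -- τ2
    intro h hb
    exact absurd (by simpa [mapAtom] using hb _ (List.mem_singleton.2 rfl)) (inv1 _)
  · -- τ3
    intro h hb
    have hE : ((3 : ℕ), [h 0, h 1]) ∈ Iminus M := by
      simpa [mapAtom] using hb _ (List.mem_singleton.2 rfl)
    obtain ⟨n, hn, hc⟩ := inv3 _ hE
    simp only [List.cons.injEq, and_true] at hc
    refine ⟨h, fun _ _ => rfl, ?_⟩
    intro a ha
    simp only [List.mem_singleton] at ha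
    subst ha
    exact Or.inr (Or.inl ⟨n, hn, by simp [mapAtom, hc.1, hc.2]⟩)
  · -- τ4
    intro h hb
    have hR : ((4 : ℕ), [h 0, h 1]) ∈ Iminus M := by
      simpa [mapAtom] using hb ((4 : ℕ), [(0 : Var), 1]) (by simp)
    have hE1 : ((3 : ℕ), [h 0, h 2]) ∈ Iminus M := by
      simpa [mapAtom] using hb ((3 : ℕ), [(0 : Var), 2]) (by simp)
    have hE2 : ((3 : ℕ), [h 1, h 3]) ∈ Iminus M := by
      simpa [mapAtom] using hb ((3 : ℕ), [(1 : Var), 3]) (by simp)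
    obtain ⟨n, hn, hc⟩ := inv4 _ hR
    obtain ⟨m, hm, hcm⟩ := inv3 _ hE1
    obtain ⟨l, hl, hcl⟩ := inv3 _ hE2
    simp only [List.cons.injEq, and_true] at hc hcm hcl
    have hmn : m = n := Sum.inr_injective (hcm.1.symm.trans hc.1)
    have hln : l = n + 1 := Sum.inr_injective (hcl.1.symm.trans hc.2)
    refine ⟨h, fun _ _ => rfl, ?_⟩
    intro a ha
    simp only [List.mem_singleton] at ha
    subst ha
    refine Or.inr (Or.inl ⟨n+1, by omega, ?_⟩)
    simp [mapAtom]
    constructor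
    · rw [hcm.2, hmn]
    · rw [hcl.2, hln]
  · -- τ5 : U(x) ∧ R(x,y) → T(y).  Vacuous: U only at M, R starts below M.
    intro h hb
    have hU : ((2 : ℕ), [h 0]) ∈ Iminus M := by
      simpa [mapAtom] using hb ((2 : ℕ), [(0 : Var)]) (by simp)
    have hR : ((4 : ℕ), [h 0, h 1]) ∈ Iminus M := by
      simpa [mapAtom] using hb ((4 : ℕ), [(0 : Var), 1]) (by simp)
    have h2 := inv2 _ hU
    obtain ⟨n, hn, hc⟩ := inv4 _ hR
    simp only [List.cons.injEq, and_true] at h2 hc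
    have : Sum.inr (α := ℕ) M = Sum.inr n := h2.symm.trans hc.1
    have := Sum.inr_injective this
    omega
  · -- τ6 : vacuous, no T facts
    intro h hb
    exact absurd (by simpa [mapAtom] using hb ((5 : ℕ), [(0 : Var)]) (by simp)) (inv5 _)
  · -- τ7 : vacuous
    intro h hb
    exact absurd (by simpa [mapAtom] using hb ((5 : ℕ), [(0 : Var)]) (by simp)) (inv5 _)

end Aux4
section Aux5

variable {D : Type}

/-- `u` has an `E`-path of length `k` to a `U`-node. -/
def pathU (I : Inst D) (u : D) (k : ℕ) : Prop :=
  ∃ p : ℕ → D, p 0 = u ∧ (∀ j < k, ((3 : ℕ), [p j, p (j+1)]) ∈ I) ∧ ((2 : ℕ), [p k]) ∈ I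

lemma reachU_iff {I : Inst D} {u : D} : reachU I u ↔ ∃ k, pathU I u k := Iff.rfl

/-- The key bridge lemma: an edge whose source has a `U`-path no longer than
some `U`-path of the target forces the goal fact. -/
lemma bridge {I' : Inst D} (hsig' : sigmaHolds sg0 I') {x y : D} {k l : ℕ}
    (hxy : ((3 : ℕ), [x, y]) ∈ I') (hx : pathU I' x k) (hy : pathU I' y l) (hkl : k ≤ l) :
    ((0 : ℕ), ([] : List D)) ∈ I' := by
  obtain ⟨p, hp0, hedge, hend⟩ := hx
  obtain ⟨p', hp'0, hedge', hend'⟩ := hy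
  have hRsync : ∀ j, j ≤ k → ((4 : ℕ), [p j, p' j]) ∈ I' := by
    intro j
    induction j with
    | zero =>
      intro _
      rw [hp0, hp'0]
      exact tau3_app hsig' hxy
    | succ i ih =>
      intro hik
      exact tau4_app hsig' (ih (by omega)) (hedge i (by omega)) (hedge' i (by omega))
  have hT0 : ((5 : ℕ), [p' k]) ∈ I' := tau5_app hsig' hend (hRsync k le_rfl)
  have hTprop : ∀ i, k + i ≤ l → ((5 : ℕ), [p' (k + i)]) ∈ I' := by
    intro i
    induction i with
    | zero => intro _; exact hT0
    | succ i ih =>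
      intro hil
      have := tau6_app hsig' (ih (by omega)) (hedge' (k + i) (by omega))
      exact this
  have hTl : ((5 : ℕ), [p' l]) ∈ I' := by
    have := hTprop (l - k) (by omega)
    rwa [show k + (l - k) = l from by omega] at this
  exact tau7_app hsig' hTl hend'

/-- Monotone determinacy. -/
lemma monDet_holds :
    monDet S0 (fun _ I => bcqHolds q0 I) (fun _ I => dlViewImage V0 I) sg0 := by
  classical
  intro D I I' _ hSI' hsig hsig' hvim hq
  obtain ⟨h₀, hall⟩ := hq
  have hG : ((0 : ℕ), ([] : List D)) ∈ I := by
    simpa [mapAtom] using hall _ (show ((0 : ℕ), ([] : List Var)) ∈ q0 by simp [q0])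
  obtain ⟨c, hc⟩ := chain_exists hsig (h₀ 0) hG
  have hU : ∀ n, ((2 : ℕ), [c n]) ∈ I := fun n => tau2_app hsig (hc n).1
  have hE' : ∀ n, ((3 : ℕ), [c n, c (n+1)]) ∈ I' := by
    intro n
    have hv : ((6 : ℕ), [c n, c (n+1)]) ∈ dlViewImage V0 I' := hvim (ve_in_vim (hc n).2)
    rcases vim_inv hSI' hv with ⟨u, v, heq, hEm⟩ | ⟨u, heq, _⟩
    · simp only [Prod.mk.injEq, List.cons.injEq, and_true, true_and] at heq
      rwa [heq.1, heq.2]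
    · simp at heq
  have hreach : ∀ n, ∃ k, pathU I' (c n) k := by
    intro n
    have hv : ((7 : ℕ), [c n]) ∈ dlViewImage V0 I' :=
      hvim (vw_in_vim ⟨0, fun _ => c n, rfl, by omega, hU n⟩)
    rcases vim_inv hSI' hv with ⟨u, v, heq, _⟩ | ⟨u, heq, hr⟩
    · simp at heq
    · simp only [Prod.mk.injEq, List.cons.injEq, and_true, true_and] at heq
      rw [heq]
      exact reachU_iff.1 hr
  by_contra hq'
  have hnG : ((0 : ℕ), ([] : List D)) ∉ I' := by
    intro hmem
    apply hq'
    refine ⟨fun _ => h₀ 0, ?_⟩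
    intro a ha
    simp only [q0, List.mem_singleton] at ha
    subst ha
    simpa [mapAtom] using hmem
  set m : ℕ → ℕ := fun n => Nat.find (hreach n) with hm
  have hdesc : ∀ n, m (n+1) < m n := by
    intro n
    by_contra hle
    push_neg at hle
    exact hnG (bridge hsig' (hE' n) (Nat.find_spec (hreach n))
      (Nat.find_spec (hreach (n+1))) hle)
  have hbound : ∀ n, m n + n ≤ m 0 := by
    intro n
    induction n with
    | zero => omega
    | succ i ih =>
      have := hdesc i
      omega
  have := hbound (m 0 + 1)
  omega

end Aux5
section Aux6

open Sum

/-- `Cmod` is a universal model of the canonical database of `q0`. -/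
lemma Cmod_univ : isUnivModel sg0 (canondb q0) Cmod Sum.inl := by
  refine ⟨?_, Cmod_sigma, ?_⟩
  · intro a ha
    have : a = ((0 : ℕ), ([] : List Var)) := by
      simpa [canondb, q0] using ha
    subst this
    exact Or.inl (by simp [mapAtom])
  · intro F J f hf hsigJ
    have hG : ((0 : ℕ), ([] : List F)) ∈ J := by
      have := hf _ (show ((0 : ℕ), ([] : List Var)) ∈ canondb q0 by simp [canondb, q0])
      simpa [mapAtom] using this
    obtain ⟨c, hc⟩ := chain_exists hsigJ (f 0) hG
    have hU : ∀ n, ((2 : ℕ), [c n]) ∈ J := fun n => tau2_app hsigJ (hc n).1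
    have hR : ∀ n, ((4 : ℕ), [c n, c (n+1)]) ∈ J := fun n => tau3_app hsigJ (hc n).2
    have hT : ∀ n, ((5 : ℕ), [c (n+1)]) ∈ J := fun n => tau5_app hsigJ (hU n) (hR n)
    refine ⟨Sum.elim f c, ?_, fun d => rfl⟩
    rintro a (rfl | ⟨n, rfl⟩ | ⟨n, rfl⟩ | ⟨n, rfl⟩ | ⟨n, rfl⟩ | ⟨n, rfl⟩)
    · simpa [mapAtom] using hG
    · simpa [mapAtom] using (hc n).1
    · simpa [mapAtom] using hU n
    · simpa [mapAtom] using hT n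
    · simpa [mapAtom] using (hc n).2
    · simpa [mapAtom] using hR n

/-- Shape of the view image of `Cmod`. -/
lemma vimC_shape : ∀ a ∈ dlViewImage V0 Cmod,
    (∃ n, a = ((6 : ℕ), [Sum.inr n, Sum.inr (n+1)])) ∨ (∃ n, a = ((7 : ℕ), [Sum.inr n])) := by
  intro a ha
  rcases vim_inv Cmod_over ha with ⟨u, v, rfl, hE⟩ | ⟨u, rfl, hr⟩
  · obtain ⟨n, hn⟩ := Cmod_inv3 hE
    simp only [List.cons.injEq, and_true] at hn
    exact Or.inl ⟨n, by rw [hn.1, hn.2]⟩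
  · right
    obtain ⟨k, p, hp0, hedge, hend⟩ := hr
    cases k with
    | zero =>
      obtain ⟨n, hn⟩ := Cmod_inv2 hend
      simp only [List.cons.injEq, and_true] at hn
      exact ⟨n, by rw [← hp0, hn]⟩
    | succ k =>
      have := hedge 0 (by omega)
      obtain ⟨n, hn⟩ := Cmod_inv3 this
      simp only [List.cons.injEq, and_true] at hn
      exact ⟨n, by rw [← hp0, hn.1]⟩

/-- The infinite ray graph on `ℕ`. -/
def rayG : SimpleGraph ℕ where
  Adj a b := b = a + 1 ∨ a = b + 1
  symm := by constructor; intro a b h; tauto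
  loopless := by constructor; intro a h; omega

lemma ray_reach0 : ∀ n, rayG.Reachable 0 n := by
  intro n
  induction n with
  | zero => exact SimpleGraph.Reachable.refl 0
  | succ n ih => exact ih.trans (SimpleGraph.Adj.reachable (Or.inl rfl))

lemma ray_conn : rayG.Connected := by
  rw [SimpleGraph.connected_iff]
  exact ⟨fun a b => (ray_reach0 a).symm.trans (ray_reach0 b), ⟨0⟩⟩

lemma ray_no_cross (n : ℕ) :
    ∀ (x y : ℕ), (rayG \ SimpleGraph.fromEdgeSet {s(n, n+1)}).Walk x y →
      x ≤ n → n + 1 ≤ y → False := by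
  intro x y w
  induction w with
  | nil => intro h1 h2; omega
  | @cons a z y hadj w ih =>
    intro hx hy
    have hadj' : rayG.Adj a z ∧ ¬ (SimpleGraph.fromEdgeSet {s(n, n+1)}).Adj a z := hadj
    by_cases hz : z ≤ n
    · exact ih hz hy
    · push_neg at hz
      rcases hadj'.1 with h1 | h1
      · -- z = a + 1
        have hxn : a = n := by omega
        have hzn : z = n + 1 := by omega
        apply hadj'.2
        rw [SimpleGraph.fromEdgeSet_adj]
        subst hxn hzn
        exact ⟨by simp, by omega⟩
      · omega

lemma ray_acyclic : rayG.IsAcyclic := by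
  rw [SimpleGraph.isAcyclic_iff_forall_adj_isBridge]
  intro v w hvw
  rw [SimpleGraph.isBridge_iff]
  rcases hvw with h1 | h1
  · subst h1
    intro hreach
    obtain ⟨p⟩ := hreach
    exact ray_no_cross v v (v+1) p le_rfl le_rfl
  · subst h1
    intro hreach
    have hreach' := hreach.symm
    rw [show s(w + 1, w) = s(w, w+1) from Sym2.eq_swap] at hreach'
    obtain ⟨p⟩ := hreach'
    exact ray_no_cross w w (w+1) p le_rfl le_rfl

/-- The bounded treewidth view image property holds. -/
lemma btvip_holds : btvipCQ S0 q0 V0 sg0 := by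
  refine ⟨1, ℕ ⊕ ℕ, Cmod, Sum.inl, Cmod_univ, Cmod_over, ℕ, rayG,
    fun n => {x | x = Sum.inr n ∨ x = Sum.inr (n+1)}, ⟨ray_conn, ray_acyclic⟩, ?_, ?_, ?_⟩
  · intro v
    refine ⟨{Sum.inr v, Sum.inr (v+1)}, ?_, ?_⟩
    · intro x hx
      rcases hx with rfl | rfl <;> simp
    · have := Finset.card_insert_le (Sum.inr v : ℕ ⊕ ℕ) {Sum.inr (v+1)}
      simpa using this
  · intro a ha
    rcases vimC_shape a ha with ⟨n, rfl⟩ | ⟨n, rfl⟩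
    · refine ⟨n, ?_⟩
      intro d hd
      simp only [List.mem_cons, List.mem_singleton, List.not_mem_nil, or_false] at hd
      rcases hd with rfl | rfl
      · exact Or.inl rfl
      · exact Or.inr rfl
    · refine ⟨n, ?_⟩
      intro d hd
      simp only [List.mem_singleton] at hd
      subst hd
      exact Or.inl rfl
  · intro d
    match d with
    | Sum.inl v =>
      intro u
      exact absurd u.2 (by simp)
    | Sum.inr 0 =>
      intro u v
      have hu : u.1 = 0 := by
        rcases u.2 with h | h
        · exact (Sum.inr_injective h).symm
        · exact absurd (Sum.inr_injective h) (by omega)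
      have hv : v.1 = 0 := by
        rcases v.2 with h | h
        · exact (Sum.inr_injective h).symm
        · exact absurd (Sum.inr_injective h) (by omega)
      have : u = v := Subtype.ext (hu.trans hv.symm)
      rw [this]
    | Sum.inr (m+1) =>
      intro u v
      have hu : u.1 = m ∨ u.1 = m + 1 := by
        rcases u.2 with h | h
        · exact Or.inr (Sum.inr_injective h).symm
        · exact Or.inl (by have := Sum.inr_injective h; omega)
      have hv : v.1 = m ∨ v.1 = m + 1 := by
        rcases v.2 with h | h
        · exact Or.inr (Sum.inr_injective h).symm
        · exact Or.inl (by have := Sum.inr_injective h; omega)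
      by_cases huv : u.1 = v.1
      · rw [Subtype.ext huv]
      · apply SimpleGraph.Adj.reachable
        show rayG.Adj u.1 v.1
        rcases hu with h1 | h1 <;> rcases hv with h2 | h2 <;>
          first
            | exact absurd (h1.trans h2.symm) huv
            | (left; omega)
            | (right; omega)

end Aux6
section Aux7

open Sum

lemma vimIminus_ve {M n : ℕ} (h : n < M) :
    ((6 : ℕ), [Sum.inr n, Sum.inr (n+1)]) ∈ dlViewImage V0 (Iminus M) :=
  ve_in_vim (Or.inl ⟨n, h, rfl⟩)

lemma vimIminus_vw {M n : ℕ} (h : n ≤ M) :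
    ((7 : ℕ), [(Sum.inr n : ℕ ⊕ ℕ)]) ∈ dlViewImage V0 (Iminus M) := by
  apply vw_in_vim
  refine ⟨M - n, fun j => Sum.inr (n + j), by simp, ?_, ?_⟩
  · intro j hj
    have : n + j < M := by omega
    exact Or.inl ⟨n + j, this, rfl⟩
  · show ((2 : ℕ), [(Sum.inr (n + (M - n)) : ℕ ⊕ ℕ)]) ∈ Iminus M
    have : n + (M - n) = M := by omega
    rw [this]
    exact Or.inr (Or.inr rfl)

/-- Any finite subset of the view image of `Cmod` is contained in the view
image of a long enough finite chain. -/
lemma transfer {J₀ : Inst (ℕ ⊕ ℕ)} (hfin : J₀.Finite)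
    (hsub : J₀ ⊆ dlViewImage V0 Cmod) :
    ∃ M, J₀ ⊆ dlViewImage V0 (Iminus M) := by
  classical
  set g : Atom (ℕ ⊕ ℕ) → ℕ := fun a =>
    match a.2 with
    | (Sum.inr n) :: _ => n
    | _ => 0 with hg
  have himg : (g '' J₀).Finite := hfin.image g
  obtain ⟨N, hN⟩ := himg.bddAbove
  refine ⟨N + 1, ?_⟩
  intro a ha
  rcases vimC_shape a (hsub ha) with ⟨n, rfl⟩ | ⟨n, rfl⟩
  · have hgn : g ((6 : ℕ), [(Sum.inr n : ℕ ⊕ ℕ), Sum.inr (n+1)]) = n := rfl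
    have : n ≤ N := by
      have := hN (Set.mem_image_of_mem g ha)
      rwa [hgn] at this
    exact vimIminus_ve (by omega)
  · have hgn : g ((7 : ℕ), [(Sum.inr n : ℕ ⊕ ℕ)]) = n := rfl
    have : n ≤ N := by
      have := hN (Set.mem_image_of_mem g ha)
      rwa [hgn] at this
    exact vimIminus_vw (by omega)

/-- No Datalog rewriting. -/
lemma no_dl_rewriting :
    ¬ ∃ R : DatalogQuery, dlOver SV0 R ∧ dlBoolean R ∧
        isRewriting S0 (fun _ I => bcqHolds q0 I) (fun _ I => dlViewImage V0 I) sg0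
          (fun _ J => dlHolds R J) := by
  rintro ⟨R, _, _, hrw⟩
  have h1 : dlHolds R (dlViewImage V0 Cmod) :=
    (hrw _ Cmod Cmod_over Cmod_sigma).2 Cmod_q
  obtain ⟨J₀, hsub, hfin, hJ₀⟩ := dlHolds_compact h1
  obtain ⟨M, hM⟩ := transfer hfin hsub
  have h2 : dlHolds R (dlViewImage V0 (Iminus M)) := dlHolds_mono hM hJ₀
  exact Iminus_not_q M ((hrw _ (Iminus M) (Iminus_over M) (Iminus_sigma M)).1 h2)

/-- No (possibly infinite) UCQ rewriting. -/
lemma no_ucq_rewriting :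
    ¬ ∃ (ι : Type) (F : ι → BCQ), (∀ i : ι, bcqOver SV0 (F i)) ∧
        isRewriting S0 (fun _ I => bcqHolds q0 I) (fun _ I => dlViewImage V0 I) sg0
          (fun _ J => ∃ i : ι, bcqHolds (F i) J) := by
  rintro ⟨ι, F, _, hrw⟩
  obtain ⟨i, h, hh⟩ : ∃ i, bcqHolds (F i) (dlViewImage V0 Cmod) :=
    (hrw _ Cmod Cmod_over Cmod_sigma).2 Cmod_q
  set J₀ : Inst (ℕ ⊕ ℕ) := mapAtom h '' {a | a ∈ F i} with hJ₀
  have hfin : J₀.Finite := Set.Finite.image _ (F i).finite_toSet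
  have hsub : J₀ ⊆ dlViewImage V0 Cmod := by
    rintro b ⟨a, ha, rfl⟩
    exact hh a ha
  obtain ⟨M, hM⟩ := transfer hfin hsub
  have h2 : ∃ j, bcqHolds (F j) (dlViewImage V0 (Iminus M)) :=
    ⟨i, h, fun a ha => hM ⟨a, ha, rfl⟩⟩
  exact Iminus_not_q M ((hrw _ (Iminus M) (Iminus_over M) (Iminus_sigma M)).1 h2)

end Aux7
/-- failure of Datalog rewritability.
There are a finite set `sg` of TGDs, a Boolean CQ `q`, and a set `V` of views
with frontier-guarded Datalog definitions such that `(q, V, sg)` has the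
bounded treewidth view image property, `q` is monotonically determined by `V`
w.r.t. `sg` over all instances, and yet there is no Datalog rewriting of `q`
over `V` w.r.t. `sg`; indeed there is no rewriting expressible as a (possibly
infinite) disjunction of CQs over the view schema. -/
theorem failure_of_datalog_rewritability :
    ∃ (S SV : Finset RelSym) (sg : List TGD) (q : BCQ) (V : DLViews),
      Disjoint S SV ∧
      (∀ τ ∈ sg, tgdOver S τ) ∧
      bcqOver S q ∧
      (∀ vd ∈ V, vd.1 ∈ SV ∧ dlOver S vd.2 ∧ isFGDL S vd.2) ∧
      btvipCQ S q V sg ∧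
      monDet S (fun _ I => bcqHolds q I) (fun _ I => dlViewImage V I) sg ∧
      (¬ ∃ R : DatalogQuery, dlOver SV R ∧ dlBoolean R ∧
          isRewriting S (fun _ I => bcqHolds q I) (fun _ I => dlViewImage V I) sg
            (fun _ J => dlHolds R J)) ∧
      (¬ ∃ (ι : Type) (F : ι → BCQ), (∀ i : ι, bcqOver SV (F i)) ∧
          isRewriting S (fun _ I => bcqHolds q I) (fun _ I => dlViewImage V I) sg
            (fun _ J => ∃ i : ι, bcqHolds (F i) J)) := by
  refine ⟨S0, SV0, sg0, q0, V0, by decide, by unfold tgdOver; decide,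
    by unfold bcqOver; decide, by unfold dlOver isIDB isFGDL; decide,
    btvip_holds, monDet_holds, no_dl_rewriting, no_ucq_rewriting⟩

end MonDetPaper
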